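/- Let ℓ and r be integers with 2 ≤ r ≤ ⌊ℓ/2⌋ − 1. Then β_{r−1,ℓ−2} + β_{r,ℓ} − β_{r,ℓ−1} = 0. -/
import Mathlib


/-- Binomial coefficient C(n, j) for integers, taken to be 0 when j < 0 or j > n. -/
def Cb (n j : ℤ) : ℤ := if 0 ≤ j ∧ j ≤ n then (n.toNat).choose j.toNat else 0

/-- The sequence B_{r,ℓ}(m): B_{1,ℓ}(m) = C(ℓ,m) − 1 and, for r ≥ 2,
    B_{r,ℓ}(m) = B_{r−1,ℓ}(m) − C(ℓ−2(r−1), m−(r−1))·B_{r−1,ℓ}(r−1). -/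
def Bseq (ℓ : ℕ) : ℕ → ℤ → ℤ
  | 0, m => Cb (ℓ : ℤ) m - 1
  | 1, m => Cb (ℓ : ℤ) m - 1
  | (r + 2), m =>
      Bseq ℓ (r + 1) m
        - Cb ((ℓ : ℤ) - 2 * (r + 1)) (m - (r + 1)) * Bseq ℓ (r + 1) ((r : ℤ) + 1)

/-- β_{r,ℓ} = B_{r,ℓ}(r). -/
def betaSeq (ℓ r : ℕ) : ℤ := Bseq ℓ r r

open Polynomial Finset

noncomputable def Pp (l : ℕ) : Polynomial ℤ :=
  ∑ j ∈ Finset.range (l+1),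
    C ((-1)^j * ((l-j).choose j : ℤ)) * ((1 + X)^(l - 2*j) * X^j)

noncomputable def Qq (l : ℕ) : Polynomial ℤ := ∑ k ∈ Finset.range (l+1), X^k

lemma Pp_pad (l N : ℕ) (h : l + 1 ≤ N) :
    Pp l = ∑ j ∈ Finset.range N,
      C ((-1)^j * ((l-j).choose j : ℤ)) * ((1 + X)^(l - 2*j) * X^j) := by
  rw [Pp]
  refine Finset.sum_subset (Finset.range_subset_range.mpr h) ?_
  intro j _ hj
  simp only [Finset.mem_range, not_lt] at hj
  have h1 : l - j = 0 := by omega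
  rw [h1, Nat.choose_eq_zero_of_lt (by omega)]
  simp

lemma termwise (l j : ℕ) :
    C (((-1)^(j+1) * (((l+2)-(j+1)).choose (j+1) : ℤ))) * ((1 + X : Polynomial ℤ)^((l+2) - 2*(j+1)) * X^(j+1))
    = (1+X) * (C ((-1)^(j+1) * (((l+1)-(j+1)).choose (j+1) : ℤ)) * ((1 + X)^((l+1) - 2*(j+1)) * X^(j+1)))
      - X * (C ((-1)^j * ((l-j).choose j : ℤ)) * ((1 + X)^(l - 2*j) * X^j)) := by
  rcases Nat.lt_or_ge (2*j) (l+1) with h | h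
  · have c1 : (l+2)-(j+1) = (l-j)+1 := by omega
    have c2 : (l+1)-(j+1) = l-j := by omega
    rw [c1, c2, Nat.choose_succ_succ (l-j) j]
    rcases Nat.lt_or_ge (2*j) l with h2 | h2
    · have e1 : (l+2) - 2*(j+1) = ((l+1) - 2*(j+1)) + 1 := by omega
      have e2 : l - 2*j = ((l+1) - 2*(j+1)) + 1 := by omega
      rw [e1, e2]
      push_cast
      simp only [map_mul, map_add, map_pow, map_neg, map_one]
      ring
    · have z : (l-j).choose (j+1) = 0 := Nat.choose_eq_zero_of_lt (by omega)
      have o : (l-j).choose j = 1 := by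
        have : l - j = j := by omega
        rw [this, Nat.choose_self]
      have e1 : (l+2) - 2*(j+1) = 0 := by omega
      have e2 : l - 2*j = 0 := by omega
      rw [z, o, e1, e2]
      push_cast
      simp only [map_mul, map_add, map_pow, map_neg, map_one, map_zero, mul_zero, zero_mul]
      ring
  · have z1 : (((l+2)-(j+1)).choose (j+1)) = 0 := Nat.choose_eq_zero_of_lt (by omega)
    have z2 : (((l+1)-(j+1)).choose (j+1)) = 0 := Nat.choose_eq_zero_of_lt (by omega)
    have z3 : ((l-j).choose j) = 0 := Nat.choose_eq_zero_of_lt (by omega)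
    rw [z1, z2, z3]
    simp

lemma Pp_rec (l : ℕ) : Pp (l+2) = (1+X) * Pp (l+1) - X * Pp l := by
  have h2 : Pp (l+2) = ∑ j ∈ Finset.range (l+3),
      C (((-1)^j * (((l+2)-j).choose j : ℤ))) * ((1 + X : Polynomial ℤ)^((l+2) - 2*j) * X^j) := rfl
  rw [h2, Finset.sum_range_succ']
  simp only [termwise]
  rw [Finset.sum_sub_distrib]
  have hP1 : ∑ j ∈ Finset.range (l+2),
      (1+X) * (C ((-1)^(j+1) * (((l+1)-(j+1)).choose (j+1) : ℤ)) * ((1 + X : Polynomial ℤ)^((l+1) - 2*(j+1)) * X^(j+1)))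
      = (1+X) * (Pp (l+1) - (1+X)^(l+1)) := by
    rw [← Finset.mul_sum]
    congr 1
    have : Pp (l+1) = ∑ j ∈ Finset.range (l+3),
        C ((-1)^j * (((l+1)-j).choose j : ℤ)) * ((1 + X : Polynomial ℤ)^((l+1) - 2*j) * X^j) :=
      Pp_pad (l+1) (l+3) (by omega)
    rw [this]
    conv_rhs => rw [Finset.sum_range_succ']
    have f0 : C ((-1)^0 * (((l+1)-0).choose 0 : ℤ)) * ((1 + X : Polynomial ℤ)^((l+1)-2*0) * X^0) = (1+X)^(l+1) := by
      simp
    rw [f0]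
    ring
  have hP0 : ∑ j ∈ Finset.range (l+2),
      X * (C ((-1)^j * ((l-j).choose j : ℤ)) * ((1 + X : Polynomial ℤ)^(l - 2*j) * X^j))
      = X * Pp l := by
    rw [← Finset.mul_sum, ← Pp_pad l (l+2) (by omega)]
  rw [hP1, hP0]
  have j0 : C (((-1)^0 * (((l+2)-0).choose 0 : ℤ))) * ((1 + X : Polynomial ℤ)^((l+2) - 2*0) * X^0)
      = (1+X)^(l+2) := by simp
  rw [j0]
  ring

lemma Qq_rec (l : ℕ) : Qq (l+2) = (1+X) * Qq (l+1) - X * Qq l := by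
  have h1 : Qq (l+2) = Qq (l+1) + X^(l+2) := Finset.sum_range_succ _ _
  have h2 : Qq (l+1) = Qq l + X^(l+1) := Finset.sum_range_succ _ _
  rw [h1, h2]
  ring

lemma Pp_eq_Qq (l : ℕ) : Pp l = Qq l := by
  induction l using Nat.strong_induction_on with
  | _ l ih =>
    match l with
    | 0 => simp [Pp, Qq]
    | 1 =>
      rw [Pp, Qq]
      simp [Finset.sum_range_succ]
    | (n+2) =>
      rw [Pp_rec, Qq_rec, ih (n+1) (by omega), ih n (by omega)]

lemma Qq_coeff (l r : ℕ) (h : r ≤ l) : (Qq l).coeff r = 1 := by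
  rw [Qq, Polynomial.finset_sum_coeff]
  simp only [Polynomial.coeff_X_pow]
  rw [Finset.sum_ite_eq (Finset.range (l+1)) r (fun _ => (1:ℤ))]
  simp [Nat.lt_succ_of_le h]

lemma Pp_coeff (l r : ℕ) : (Pp l).coeff r
    = ∑ j ∈ Finset.range (l+1),
        (if j ≤ r then ((-1)^j * ((l-j).choose j : ℤ) * ((l-2*j).choose (r-j) : ℤ)) else 0) := by
  rw [Pp, Polynomial.finset_sum_coeff]
  refine Finset.sum_congr rfl ?_
  intro j _
  rw [Polynomial.coeff_C_mul, Polynomial.coeff_mul_X_pow', Polynomial.coeff_one_add_X_pow]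
  rw [mul_ite, mul_zero, mul_assoc]

lemma Skey (l r : ℕ) (h : r ≤ l) :
    ∑ j ∈ Finset.range (r+1),
      ((-1)^j * ((l-j).choose j : ℤ) * ((l-2*j).choose (r-j) : ℤ)) = 1 := by
  have hc := Pp_coeff l r
  rw [Pp_eq_Qq, Qq_coeff l r h] at hc
  have hsub : ∑ j ∈ Finset.range (l+1),
      (if j ≤ r then ((-1)^j * ((l-j).choose j : ℤ) * ((l-2*j).choose (r-j) : ℤ)) else 0)
      = ∑ j ∈ Finset.range (r+1),
      (if j ≤ r then ((-1)^j * ((l-j).choose j : ℤ) * ((l-2*j).choose (r-j) : ℤ)) else 0) := by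
    symm
    refine Finset.sum_subset (Finset.range_subset_range.mpr (by omega)) ?_
    intro j _ hj
    simp only [Finset.mem_range, not_lt] at hj
    rw [if_neg (by omega)]
  rw [hsub] at hc
  have hce : ∑ j ∈ Finset.range (r+1),
      ((-1)^j * ((l-j).choose j : ℤ) * ((l-2*j).choose (r-j) : ℤ))
      = ∑ j ∈ Finset.range (r+1),
      (if j ≤ r then ((-1)^j * ((l-j).choose j : ℤ) * ((l-2*j).choose (r-j) : ℤ)) else 0) := by
    refine Finset.sum_congr rfl ?_
    intro j hj
    rw [Finset.mem_range] at hj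
    rw [if_pos (by omega)]
  rw [hce, ← hc]

lemma Cb_coe (n k : ℕ) : Cb (n : ℤ) (k : ℤ) = (n.choose k : ℤ) := by
  rcases le_or_gt k n with hk | hk
  · rw [Cb, if_pos ⟨Int.natCast_nonneg k, by exact_mod_cast hk⟩]
    simp
  · rw [Cb, if_neg (fun hc => absurd (show k ≤ n by exact_mod_cast hc.2) (not_le.mpr hk)),
      Nat.choose_eq_zero_of_lt hk]
    simp

lemma Cb_bridge (l j r : ℕ) (hjr : j < r) :
    Cb ((l:ℤ) - 2*j) ((r:ℤ) - j) = ((l - 2*j).choose (r - j) : ℤ) := by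
  rcases le_or_gt (2*j) l with hl | hl
  · have e1 : (l:ℤ) - 2*j = ((l - 2*j : ℕ) : ℤ) := by push_cast; omega
    have e2 : (r:ℤ) - j = ((r - j : ℕ) : ℤ) := by push_cast; omega
    rw [e1, e2, Cb_coe]
  · have e1 : l - 2*j = 0 := by omega
    rw [e1, Nat.choose_eq_zero_of_lt (by omega)]
    rw [Cb, if_neg (by push_cast; omega)]
    simp

lemma Bseq_unroll (l : ℕ) : ∀ r : ℕ, ∀ m : ℤ, Bseq l (r+1) m
    = Cb (l : ℤ) m - 1
      - ∑ j ∈ Finset.range r, betaSeq l (j+1) * Cb ((l:ℤ) - 2*((j:ℤ)+1)) (m - ((j:ℤ)+1)) := by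
  intro r
  induction r with
  | zero => intro m; simp [Bseq]
  | succ r ih =>
    intro m
    have hdef : Bseq l (r+2) m = Bseq l (r+1) m
        - Cb ((l : ℤ) - 2 * ((r:ℤ) + 1)) (m - ((r:ℤ) + 1)) * Bseq l (r + 1) ((r : ℤ) + 1) := rfl
    rw [hdef, ih m, Finset.sum_range_succ]
    have hb : Bseq l (r+1) ((r:ℤ)+1) = betaSeq l (r+1) := by
      rw [betaSeq]
      norm_num
    rw [hb]
    ring

lemma beta_formula (r : ℕ) : ∀ l, 1 ≤ r → r ≤ l →
    betaSeq l r = (-1)^(r+1) * ((l - r).choose r : ℤ) := by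
  induction r using Nat.strong_induction_on with
  | _ r ih =>
    intro l h1 hl
    obtain ⟨s, rfl⟩ : ∃ s, r = s + 1 := ⟨r-1, by omega⟩
    have hB : betaSeq l (s+1) = Bseq l (s+1) (((s:ℤ))+1) := by
      rw [betaSeq]; norm_num
    rw [hB, Bseq_unroll]
    have hterm : ∀ j ∈ Finset.range s,
        betaSeq l (j+1) * Cb ((l:ℤ) - 2*((j:ℤ)+1)) (((s:ℤ)+1) - ((j:ℤ)+1))
        = (-1 : ℤ) * ((-1)^(j+1) * ((l-(j+1)).choose (j+1) : ℤ) * ((l-2*(j+1)).choose ((s+1)-(j+1)) : ℤ)) := by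
      intro j hj
      rw [Finset.mem_range] at hj
      rw [ih (j+1) (by omega) l (by omega) (by omega)]
      have hc : Cb ((l:ℤ) - 2*((j:ℤ)+1)) (((s:ℤ)+1) - ((j:ℤ)+1))
          = ((l - 2*(j+1)).choose ((s+1) - (j+1)) : ℤ) := by
        have := Cb_bridge l (j+1) (s+1) (by omega)
        push_cast at this ⊢
        convert this using 3 <;> ring
      rw [hc, pow_succ, pow_succ]
      ring
    rw [Finset.sum_congr rfl hterm, ← Finset.mul_sum]
    have hS := Skey l (s+1) hl
    rw [Finset.sum_range_succ, Finset.sum_range_succ'] at hS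
    have hT0 : ((-1:ℤ))^0 * ((l-0).choose 0 : ℤ) * ((l-2*0).choose ((s+1)-0) : ℤ)
        = (l.choose (s+1) : ℤ) := by simp
    have hTs : ((-1:ℤ))^(s+1) * ((l-(s+1)).choose (s+1) : ℤ) * ((l-2*(s+1)).choose ((s+1)-(s+1)) : ℤ)
        = (-1)^(s+1) * ((l-(s+1)).choose (s+1) : ℤ) := by simp
    rw [hT0, hTs] at hS
    have hCl : Cb (l : ℤ) ((s:ℤ)+1) = (l.choose (s+1) : ℤ) := by
      have := Cb_coe l (s+1)
      push_cast at this ⊢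
      exact this
    rw [hCl, pow_succ, pow_succ]
    linear_combination hS

/-- for integers 2 ≤ r ≤ ⌊ℓ/2⌋ − 1,
    β_{r−1,ℓ−2} + β_{r,ℓ} − β_{r,ℓ−1} = 0. -/
theorem beta_combinatorial_identity (ℓ r : ℕ) (hr : 2 ≤ r) (hrl : r ≤ ℓ / 2 - 1) :
    betaSeq (ℓ - 2) (r - 1) + betaSeq ℓ r - betaSeq (ℓ - 1) r = 0 := by
  have hl : 2*r + 2 ≤ ℓ := by omega
  obtain ⟨t, rfl⟩ : ∃ t, r = t + 1 := ⟨r-1, by omega⟩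
  simp only [Nat.add_sub_cancel]
  have h1 : betaSeq (ℓ-2) t = (-1)^(t+1) * (((ℓ-2) - t).choose t : ℤ) :=
    beta_formula t (ℓ-2) (by omega) (by omega)
  have h2 : betaSeq ℓ (t+1) = (-1)^((t+1)+1) * ((ℓ - (t+1)).choose (t+1) : ℤ) :=
    beta_formula (t+1) ℓ (by omega) (by omega)
  have h3 : betaSeq (ℓ-1) (t+1) = (-1)^((t+1)+1) * (((ℓ-1) - (t+1)).choose (t+1) : ℤ) :=
    beta_formula (t+1) (ℓ-1) (by omega) (by omega)
  have e1 : (ℓ-2) - t = (ℓ-1) - (t+1) := by omega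
  have pascal : (ℓ - (t+1)).choose (t+1)
      = ((ℓ-1) - (t+1)).choose t + ((ℓ-1) - (t+1)).choose (t+1) := by
    have eq1 : ℓ - (t+1) = ((ℓ-1) - (t+1)) + 1 := by omega
    rw [eq1, Nat.choose_succ_succ]
  rw [h1, h2, h3, e1, pascal]
  push_cast
  ring
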